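/- Let A, B be integers and p an odd prime such that B is a quadratic residue mod p, with b^2 ≡ B (mod p). Let u_n(A,B) be the Lucas sequence with u_0=0, u_1=1, u_{n+1}=A u_n - B u_{n-1}. If A^2 - 4B is a quadratic residue mod p then u_{(p-1)/2}(A,B) ≡ 0 (mod p), and if A^2 - 4B is a quadratic nonresidue mod p then b * u_{(p-1)/2}(A,B) ≡ (A-2b | p) (mod p), where (·|p) is the Legendre symbol. -/

import Mathlib

/-- The Lucas sequence u_n(A, B). -/
def lucasU (A B : ℤ) : ℕ → ℤ
  | 0 => 0
  | 1 => 1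
  | n + 2 => A * lucasU A B (n + 1) - B * lucasU A B n

lemma lucasU_formula {R : Type*} [CommRing R] (A B : ℤ) (α β : R)
    (h1 : α + β = (A : R)) (h2 : α * β = (B : R)) (n : ℕ) :
    (α - β) * ((lucasU A B n : ℤ) : R) = α ^ n - β ^ n := by
  induction n using Nat.strong_induction_on with
  | _ n ih =>
    rcases n with _ | _ | n
    · simp [lucasU]
    · simp [lucasU]
    · have e1 := ih (n + 1) (by omega)
      have e0 := ih n (by omega)
      show (α - β) * ((A * lucasU A B (n + 1) - B * lucasU A B n : ℤ) : R) = _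
      push_cast
      push_cast at e0 e1
      linear_combination (A : R) * e1 - (B : R) * e0 - (α ^ (n + 1) - β ^ (n + 1)) * h1 +
        (α ^ n - β ^ n) * h2

theorem lucasU_half_p_sub_one (A B b : ℤ) (p : ℕ) [Fact p.Prime] (hp : p ≠ 2)
    (hb : ¬ (p : ℤ) ∣ b) (hB : b ^ 2 ≡ B [ZMOD p]) (hD : ¬ (p : ℤ) ∣ (A ^ 2 - 4 * B)) :
    (legendreSym p (A ^ 2 - 4 * B) = 1 →
      ((lucasU A B ((p - 1) / 2) : ZMod p) = 0)) ∧
    (legendreSym p (A ^ 2 - 4 * B) = -1 →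
      (((b * lucasU A B ((p - 1) / 2) : ℤ) : ZMod p) =
        ((legendreSym p (A - 2 * b) : ℤ) : ZMod p))) := by
  have hp2 : p.Prime := Fact.out
  have hodd : Odd p := hp2.odd_of_ne_two hp
  obtain ⟨k, hk⟩ := hodd
  have hple : 2 ≤ p := hp2.two_le
  set m := p / 2 with hmdef
  have hm : (p - 1) / 2 = m := by omega
  have hp1 : p - 1 = 2 * m := by omega
  set K := AlgebraicClosure (ZMod p) with hKdef
  set i := algebraMap (ZMod p) K with hidef
  have hi : Function.Injective i := i.injective
  have hcastK : ∀ x : ℤ, i ((x : ℤ) : ZMod p) = ((x : ℤ) : K) := fun x => map_intCast i x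
  -- Frobenius fixes integers
  have hfixZ : ∀ x : ℤ, ((x : ℤ) : K) ^ p = ((x : ℤ) : K) := by
    intro x
    rw [← hcastK, ← map_pow, ZMod.pow_card]
  have pow_p : ∀ x : K, x ^ p = x ^ (p - 1) * x := by
    intro x
    rw [← pow_succ]
    congr 1
    omega
  have h2p : (2 : K) ^ p = 2 := by
    have := hfixZ 2; push_cast at this; exact this
  -- Euler's criterion in K
  have euler : ∀ x : ℤ, ((x : ℤ) : K) ^ m = ((legendreSym p x : ℤ) : K) := by
    intro x
    rw [← hcastK, ← map_pow, ← hcastK (legendreSym p x)]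
    congr 1
    rw [legendreSym.eq_pow]
  have castK_ne : ∀ x : ℤ, ¬ (p : ℤ) ∣ x → ((x : ℤ) : K) ≠ 0 := by
    intro x hx h0
    apply hx
    rw [← ZMod.intCast_zmod_eq_zero_iff_dvd]
    apply hi
    rw [hcastK, map_zero, h0]
  have hpnd2 : ¬ (p : ℤ) ∣ 2 := by
    intro h
    have h2 : p ∣ 2 := by exact_mod_cast h
    have := Nat.le_of_dvd (by norm_num) h2
    omega
  have two_ne : (2 : K) ≠ 0 := by
    have := castK_ne 2 hpnd2
    push_cast at this
    exact this
  have hb0K : ((b : ℤ) : K) ≠ 0 := castK_ne b hb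
  have hpB : ¬ (p : ℤ) ∣ B := by
    intro h
    apply hb
    have hdb2 : (p : ℤ) ∣ b ^ 2 := by
      have h1 : (p : ℤ) ∣ B - b ^ 2 := hB.dvd
      have : (b : ℤ) ^ 2 = B - (B - b ^ 2) := by ring
      rw [this]
      exact dvd_sub h h1
    exact (Int.prime_iff_natAbs_prime.mpr (by simpa using hp2)).dvd_of_dvd_pow hdb2
  have hA2b : ¬ (p : ℤ) ∣ (A - 2 * b) := by
    intro h
    apply hD
    have h1 : (p : ℤ) ∣ B - b ^ 2 := hB.dvd
    have h2 : (p : ℤ) ∣ (A - 2 * b) * (A + 2 * b) := h.mul_right _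
    have : A ^ 2 - 4 * B = (A - 2 * b) * (A + 2 * b) - 4 * (B - b ^ 2) := by ring
    rw [this]
    exact dvd_sub h2 (h1.mul_left 4)
  have hD0 : ((A ^ 2 - 4 * B : ℤ) : K) ≠ 0 := castK_ne _ hD
  obtain ⟨d, hd⟩ := IsAlgClosed.exists_pow_nat_eq ((A ^ 2 - 4 * B : ℤ) : K) (n := 2) (by norm_num)
  have hd0 : d ≠ 0 := by
    intro h
    apply hD0
    rw [← hd, h]
    ring
  have hdm : d ^ (p - 1) = ((legendreSym p (A ^ 2 - 4 * B) : ℤ) : K) := by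
    rw [hp1, pow_mul, hd, euler]
  set α : K := (((A : ℤ) : K) + d) * (2 : K)⁻¹ with hαdef
  set β : K := (((A : ℤ) : K) - d) * (2 : K)⁻¹ with hβdef
  have hsum : α + β = ((A : ℤ) : K) := by
    rw [hαdef, hβdef]
    linear_combination ((A : ℤ) : K) * (mul_inv_cancel₀ two_ne)
  have hd' : d ^ 2 = ((A : ℤ) : K) ^ 2 - 4 * ((B : ℤ) : K) := by
    rw [hd]; push_cast; ring
  have hprod : α * β = ((B : ℤ) : K) := by
    rw [hαdef, hβdef]
    linear_combination -((2 : K)⁻¹) ^ 2 * hd' + ((B : ℤ) : K) * (2 * (2 : K)⁻¹ + 1) * (mul_inv_cancel₀ two_ne)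
  have hform := lucasU_formula A B α β hsum hprod m
  have hαβd : α - β = d := by
    rw [hαdef, hβdef]
    linear_combination d * (mul_inv_cancel₀ two_ne)
  have hbB : ((b : ℤ) : K) ^ 2 = ((B : ℤ) : K) := by
    rw [← hcastK b, ← hcastK B, ← map_pow]
    congr 1
    exact_mod_cast (ZMod.intCast_eq_intCast_iff _ _ _).mpr hB
  have hαβ0 : α * β ≠ 0 := by
    rw [hprod]; exact castK_ne B hpB
  have hα0 : α ≠ 0 := fun h => hαβ0 (by rw [h, zero_mul])
  have hβ0 : β ≠ 0 := fun h => hαβ0 (by rw [h, mul_zero])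
  have hbp : ((b : ℤ) : K) ^ (p - 1) = 1 := by
    have h1 : ((b : ℤ) : K) ^ (p - 1) * ((b : ℤ) : K) = 1 * ((b : ℤ) : K) := by
      rw [← pow_p, hfixZ, one_mul]
    exact mul_right_cancel₀ hb0K h1
  have hst : α ^ m * β ^ m = 1 := by
    rw [← mul_pow, hprod, ← hbB, ← pow_mul, show 2 * m = p - 1 from hp1.symm, hbp]
  have hdp : d ^ p = ((legendreSym p (A ^ 2 - 4 * B) : ℤ) : K) * d := by
    rw [pow_p, hdm]
  constructor
  · -- legendre = 1 case
    intro hℓ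
    rw [hm]
    have hdp1 : d ^ p = d := by rw [hdp, hℓ]; push_cast; ring
    have hαp : α ^ p = α := by
      rw [hαdef, mul_pow, add_pow_char, inv_pow, hfixZ, hdp1, h2p]
    have hs2 : (α ^ m) ^ 2 = 1 := by
      have h1 : α ^ (p - 1) * α = 1 * α := by
        rw [← pow_p, hαp, one_mul]
      have h2 : α ^ (p - 1) = 1 := mul_right_cancel₀ hα0 h1
      rw [← pow_mul, show m * 2 = p - 1 by omega, h2]
    have heq : β ^ m = α ^ m := by
      have h3 : (α ^ m) ^ 2 * β ^ m = α ^ m := by rw [sq, mul_assoc, hst, mul_one]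
      rwa [hs2, one_mul] at h3
    have hu : ((lucasU A B m : ℤ) : K) = 0 := by
      have h4 : d * ((lucasU A B m : ℤ) : K) = 0 := by
        rw [← hαβd, hform, heq]; ring
      exact (mul_eq_zero.mp h4).resolve_left hd0
    apply hi
    rw [hcastK, map_zero, hu]
  · -- legendre = -1 case
    intro hℓ
    rw [hm]
    set ε : ℤ := (legendreSym p (A - 2 * b) : ℤ) with hεdef
    have hdp2 : d ^ p = -d := by rw [hdp, hℓ]; push_cast; ring
    have hαp : α ^ p = β := by
      rw [hαdef, mul_pow, add_pow_char, inv_pow, hfixZ, hdp2, h2p, hβdef]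
      ring
    have hε : ((A - 2 * b : ℤ) : K) ^ m = ((ε : ℤ) : K) := euler _
    have hε2 : ((ε : ℤ) : K) ^ 2 = 1 := by
      have hA2b' : ((A - 2 * b : ℤ) : ZMod p) ≠ 0 := by
        rw [Ne, ZMod.intCast_zmod_eq_zero_iff_dvd]; exact hA2b
      rcases legendreSym.eq_one_or_neg_one p hA2b' with h | h <;>
        rw [hεdef, h] <;> push_cast <;> ring
    have hb2 : ((b : ℤ) : K) ^ 2 = α * β := hbB.trans hprod.symm
    have hkey1 : ((A - 2 * b : ℤ) : K) * α = (α - ((b : ℤ) : K)) ^ 2 := by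
      push_cast
      linear_combination (-α) * hsum + hprod - hbB
    have hab_p : (α - ((b : ℤ) : K)) ^ p = β - ((b : ℤ) : K) := by
      rw [sub_pow_char, hαp, hfixZ]
    have hprod2 : (α - ((b : ℤ) : K)) * (β - ((b : ℤ) : K)) =
        -((b : ℤ) : K) * ((A - 2 * b : ℤ) : K) := by
      push_cast
      linear_combination (-((b : ℤ) : K)) * hsum + hprod - hbB
    have hab0 : α - ((b : ℤ) : K) ≠ 0 := by
      intro h
      have := hprod2
      rw [h, zero_mul] at this
      exact (mul_ne_zero (neg_ne_zero.mpr hb0K) (castK_ne _ hA2b)) this.symm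
    have hβb0 : β - ((b : ℤ) : K) ≠ 0 := by
      intro h
      have := hprod2
      rw [h, mul_zero] at this
      exact (mul_ne_zero (neg_ne_zero.mpr hb0K) (castK_ne _ hA2b)) this.symm
    -- E5 : ε * α^m * (α - b) = β - b
    have h5a : ((ε : ℤ) : K) * α ^ m = (α - ((b : ℤ) : K)) ^ (p - 1) := by
      rw [← hε, ← mul_pow, hkey1, ← pow_mul]
      congr 1
      omega
    have E5 : ((ε : ℤ) : K) * α ^ m * (α - ((b : ℤ) : K)) = β - ((b : ℤ) : K) := by
      rw [h5a, ← pow_p, hab_p]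
    have E3 : (α ^ m) ^ 2 * α = β := by
      have h1 : (α ^ m) ^ 2 = α ^ (p - 1) := by rw [← pow_mul]; congr 1; omega
      rw [h1, ← pow_p, hαp]
    have h1 : (α ^ m) ^ 2 * (α - ((b : ℤ) : K)) =
        ((ε : ℤ) : K) * α ^ m * (β - ((b : ℤ) : K)) := by
      linear_combination (((ε : ℤ) : K) * α ^ m) * E5 - ((α ^ m) ^ 2 * (α - ((b : ℤ) : K))) * hε2
    have h2 : β * (α - ((b : ℤ) : K)) =
        ((ε : ℤ) : K) * α ^ m * α * (β - ((b : ℤ) : K)) := by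
      linear_combination α * h1 - (α - ((b : ℤ) : K)) * E3
    have h3 : ((ε : ℤ) : K) * α ^ m * α * (β - ((b : ℤ) : K)) =
        -((b : ℤ) : K) * (β - ((b : ℤ) : K)) := by
      linear_combination -h2 - hb2
    have hεsα : ((ε : ℤ) : K) * α ^ m * α = -((b : ℤ) : K) :=
      mul_right_cancel₀ hβb0 h3
    have hfm : d * ((lucasU A B m : ℤ) : K) = α ^ m - β ^ m := by
      rw [← hαβd]; exact hform
    have hfinal : ((b : ℤ) : K) * ((lucasU A B m : ℤ) : K) * (d * α ^ m * α) =
        ((ε : ℤ) : K) * (d * α ^ m * α) := by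
      linear_combination (((b : ℤ) : K) * α ^ m * α) * hfm + ((b : ℤ) : K) * E3 -
        (((b : ℤ) : K) * α) * hst - d * hεsα - ((b : ℤ) : K) * hαβd
    have hKres : ((b : ℤ) : K) * ((lucasU A B m : ℤ) : K) = ((ε : ℤ) : K) :=
      mul_right_cancel₀ (mul_ne_zero (mul_ne_zero hd0 (pow_ne_zero m hα0)) hα0) hfinal
    apply hi
    rw [hcastK, hcastK]
    push_cast
    push_cast at hKres
    exact hKres
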